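/- Let 0 < q < 1, u, v > 0, α > 0, and let f(x) = ∑_{n≥0} A_n x^n with (A_n) a bounded sequence. If u/v < 1 (so the relevant series converge absolutely), then N_q(x^{α-1} f(x))(u;v) = ((1-q)^{α-1} u^{α-1}/v^α) ∑_{n≥0} A_n (u/v)^n (1-q)^n Γ_q(α+n). -/

import Mathlib

/-- The q-Pochhammer symbol `(a;q)_n`. -/
noncomputable def qPoch (q a : ℝ) (n : ℕ) : ℝ := ∏ k ∈ Finset.range n, (1 - a * q ^ k)

/-- `(a;q)_∞`. -/
noncomputable def qPochInf (q a : ℝ) : ℝ := ∏' k : ℕ, (1 - a * q ^ k)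

/-- The first-type q-Natural transform. -/
noncomputable def qNatural (q : ℝ) (f : ℝ → ℝ) (u v : ℝ) : ℝ :=
  qPochInf q q / v * ∑' k : ℕ, q ^ k * f (u / v * q ^ k) / qPoch q q k

/-- The q-gamma function. -/
noncomputable def qGamma (q x : ℝ) : ℝ :=
  qPochInf q q / qPochInf q (q ^ x) * (1 - q) ^ (1 - x)

open Real Filter


lemma factor_pos {q a : ℝ} (hq0 : 0 < q) (hq1 : q < 1) (ha0 : 0 ≤ a) (ha1 : a < 1) (k : ℕ) :
    0 < 1 - a * q ^ k := by
  have h1 : a * q ^ k ≤ a * 1 := mul_le_mul_of_nonneg_left (pow_le_one₀ hq0.le hq1.le) ha0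
  nlinarith

lemma summable_log_factor {q a : ℝ} (hq0 : 0 < q) (hq1 : q < 1) (ha0 : 0 ≤ a) (ha1 : a < 1) :
    Summable (fun k : ℕ => Real.log (1 - a * q ^ k)) := by
  rw [← summable_neg_iff]
  refine Summable.of_nonneg_of_le (f := fun k => (1 - a)⁻¹ * (a * q ^ k)) (fun k => ?_) (fun k => ?_) ?_
  · have hfk := factor_pos hq0 hq1 ha0 ha1 k
    simp only [neg_nonneg]
    have h0 : 0 ≤ a * q ^ k := by positivity
    exact Real.log_nonpos (by nlinarith) (by nlinarith)
  · have hfk := factor_pos hq0 hq1 ha0 ha1 k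
    set x := a * q ^ k with hxdef
    have hx0 : 0 ≤ x := by positivity
    have hle : x ≤ a := by
      have : q ^ k ≤ 1 := pow_le_one₀ hq0.le hq1.le
      nlinarith
    have h2 : Real.log ((1 - x)⁻¹) ≤ (1 - x)⁻¹ - 1 :=
      Real.log_le_sub_one_of_pos (by positivity)
    rw [Real.log_inv] at h2
    have h4 : (1 - x)⁻¹ ≤ (1 - a)⁻¹ := by
      apply inv_anti₀ (by linarith) (by linarith)
    have h5 : x * (1 - x)⁻¹ ≤ x * (1 - a)⁻¹ := mul_le_mul_of_nonneg_left h4 hx0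
    have hinv : (1 - x) * (1 - x)⁻¹ = 1 := mul_inv_cancel₀ (by positivity)
    nlinarith
  · exact ((summable_geometric_of_lt_one hq0.le hq1).mul_left _).mul_left _

lemma multipliable_factor {q a : ℝ} (hq0 : 0 < q) (hq1 : q < 1) (ha0 : 0 ≤ a) (ha1 : a < 1) :
    Multipliable (fun k : ℕ => 1 - a * q ^ k) :=
  Real.multipliable_of_summable_log (fun k => factor_pos hq0 hq1 ha0 ha1 k)
    (summable_log_factor hq0 hq1 ha0 ha1)

lemma qPochInf_pos {q a : ℝ} (hq0 : 0 < q) (hq1 : q < 1) (ha0 : 0 ≤ a) (ha1 : a < 1) :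
    0 < qPochInf q a := by
  have := Real.rexp_tsum_eq_tprod (f := fun k : ℕ => 1 - a * q ^ k)
    (fun k => factor_pos hq0 hq1 ha0 ha1 k)
    (summable_log_factor hq0 hq1 ha0 ha1)
  rw [qPochInf, ← this]
  exact Real.exp_pos _

lemma tendsto_qPoch {q a : ℝ} (hq0 : 0 < q) (hq1 : q < 1) (ha0 : 0 ≤ a) (ha1 : a < 1) :
    Tendsto (fun m => qPoch q a m) atTop (nhds (qPochInf q a)) :=
  (multipliable_factor hq0 hq1 ha0 ha1).hasProd.tendsto_prod_nat

lemma qPoch_pos {q a : ℝ} (hq0 : 0 < q) (hq1 : q < 1) (ha0 : 0 ≤ a) (ha1 : a < 1) (m : ℕ) :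
    0 < qPoch q a m :=
  Finset.prod_pos (fun k _ => factor_pos hq0 hq1 ha0 ha1 k)

lemma qPochInf_le_qPoch {q a : ℝ} (hq0 : 0 < q) (hq1 : q < 1) (ha0 : 0 ≤ a) (ha1 : a < 1) (m : ℕ) :
    qPochInf q a ≤ qPoch q a m := by
  apply le_of_tendsto (tendsto_qPoch hq0 hq1 ha0 ha1)
  filter_upwards [eventually_ge_atTop m] with n hn
  have heq : qPoch q a n = qPoch q a m * ∏ k ∈ Finset.Ico m n, (1 - a * q ^ k) := by
    rw [qPoch, qPoch, ← Finset.prod_range_mul_prod_Ico _ hn]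
  rw [heq]
  have h1 : ∏ k ∈ Finset.Ico m n, (1 - a * q ^ k) ≤ 1 := by
    apply Finset.prod_le_one (fun k _ => (factor_pos hq0 hq1 ha0 ha1 k).le)
    intro k _
    have : 0 ≤ a * q ^ k := by positivity
    linarith
  nlinarith [qPoch_pos hq0 hq1 ha0 ha1 m]

lemma summable_inv_qPoch {q z : ℝ} (hq0 : 0 < q) (hq1 : q < 1) (hz0 : 0 ≤ z) (hz1 : z < 1) :
    Summable (fun k : ℕ => z ^ k / qPoch q q k) := by
  refine Summable.of_nonneg_of_le (f := fun k => (qPochInf q q)⁻¹ * z ^ k) (fun k => ?_) (fun k => ?_) ?_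
  · have := qPoch_pos hq0 hq1 hq0.le hq1 k
    positivity
  · have hP := qPochInf_le_qPoch hq0 hq1 hq0.le hq1 k
    have hPinf := qPochInf_pos hq0 hq1 hq0.le hq1
    rw [div_le_iff₀ (qPoch_pos hq0 hq1 hq0.le hq1 k), mul_comm, ← mul_assoc]
    have h1 : 1 ≤ (qPochInf q q)⁻¹ * qPoch q q k := by
      rw [← div_eq_inv_mul, le_div_iff₀ hPinf]; linarith
    nlinarith [pow_nonneg hz0 k]
  · exact (summable_geometric_of_lt_one hz0 hz1).mul_left _

set_option maxHeartbeats 1000000 in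
lemma euler_funeq {q w : ℝ} (hq0 : 0 < q) (hq1 : q < 1) (hw0 : 0 ≤ w) (hw1 : w < 1) :
    (1 - w) * (∑' k : ℕ, w ^ k / qPoch q q k) = ∑' k : ℕ, (q * w) ^ k / qPoch q q k := by
  have hqw0 : 0 ≤ q * w := by positivity
  have hqw1 : q * w < 1 := by nlinarith
  have hs := summable_inv_qPoch hq0 hq1 hw0 hw1
  have hs' := summable_inv_qPoch hq0 hq1 hqw0 hqw1
  have hshift : Summable (fun k : ℕ => w ^ (k + 1) / qPoch q q (k + 1)) :=
    (summable_nat_add_iff 1).2 hs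
  have hshift2 : Summable (fun k : ℕ => w ^ (k + 1) / qPoch q q k) := by
    apply (hs.mul_left w).congr
    intro k; rw [pow_succ']; ring
  have hP0 : qPoch q q 0 = 1 := by simp [qPoch]
  have hS : (∑' k : ℕ, w ^ k / qPoch q q k) = 1 + ∑' k : ℕ, w ^ (k + 1) / qPoch q q (k + 1) := by
    rw [Summable.tsum_eq_zero_add hs, hP0]; norm_num
  have hS' : (∑' k : ℕ, (q * w) ^ k / qPoch q q k)
      = 1 + ∑' k : ℕ, (q * w) ^ (k + 1) / qPoch q q (k + 1) := by
    rw [Summable.tsum_eq_zero_add hs', hP0]; norm_num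
  have hws : w * ∑' k : ℕ, w ^ k / qPoch q q k = ∑' k : ℕ, w ^ (k + 1) / qPoch q q k := by
    rw [← tsum_mul_left]
    apply tsum_congr; intro k; rw [pow_succ']; ring
  have hT2 : (∑' k : ℕ, w ^ (k + 1) / qPoch q q k)
      = w + w * ∑' k : ℕ, w ^ (k + 1) / qPoch q q (k + 1) := by
    rw [← hws, hS]; ring
  have hterm : ∀ k : ℕ, w ^ (k + 1) / qPoch q q (k + 1) - w ^ (k + 1) / qPoch q q k
      = (q * w) ^ (k + 1) / qPoch q q (k + 1) := by
    intro k
    have hPk := qPoch_pos hq0 hq1 hq0.le hq1 k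
    have hfk := factor_pos hq0 hq1 hq0.le hq1 k
    have hPsucc : qPoch q q (k + 1) = qPoch q q k * (1 - q * q ^ k) := by
      rw [qPoch, qPoch, Finset.prod_range_succ]
    rw [hPsucc, mul_pow]
    field_simp
    ring
  have hdiff : (∑' k : ℕ, (q * w) ^ (k + 1) / qPoch q q (k + 1))
      = (∑' k : ℕ, w ^ (k + 1) / qPoch q q (k + 1)) - ∑' k : ℕ, w ^ (k + 1) / qPoch q q k := by
    rw [← Summable.tsum_sub hshift hshift2]
    exact (tsum_congr hterm).symm
  rw [hS, hS', hdiff, hT2]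
  ring
set_option maxHeartbeats 1000000 in
lemma euler_tsum {q z : ℝ} (hq0 : 0 < q) (hq1 : q < 1) (hz0 : 0 ≤ z) (hz1 : z < 1) :
    (∑' k : ℕ, z ^ k / qPoch q q k) = (qPochInf q z)⁻¹ := by
  have hPinf := qPochInf_pos hq0 hq1 hq0.le hq1
  have hxz : ∀ m : ℕ, 0 ≤ q ^ m * z ∧ q ^ m * z ≤ z := by
    intro m
    refine ⟨by positivity, ?_⟩
    have : q ^ m ≤ 1 := pow_le_one₀ hq0.le hq1.le
    nlinarith
  have key : ∀ m : ℕ, qPoch q z m * (∑' k : ℕ, z ^ k / qPoch q q k)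
      = ∑' k : ℕ, (q ^ m * z) ^ k / qPoch q q k := by
    intro m
    induction m with
    | zero => simp [qPoch]
    | succ m ih =>
      have h1 : qPoch q z (m + 1) = qPoch q z m * (1 - z * q ^ m) := by
        rw [qPoch, qPoch, Finset.prod_range_succ]
      obtain ⟨hx0, hx1⟩ := hxz m
      have hfe := euler_funeq hq0 hq1 hx0 (lt_of_le_of_lt hx1 hz1)
      calc qPoch q z (m + 1) * (∑' k : ℕ, z ^ k / qPoch q q k)
          = (1 - q ^ m * z) * (qPoch q z m * (∑' k : ℕ, z ^ k / qPoch q q k)) := by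
            rw [h1]; ring
        _ = (1 - q ^ m * z) * (∑' k : ℕ, (q ^ m * z) ^ k / qPoch q q k) := by rw [ih]
        _ = ∑' k : ℕ, (q * (q ^ m * z)) ^ k / qPoch q q k := hfe
        _ = ∑' k : ℕ, (q ^ (m + 1) * z) ^ k / qPoch q q k := by
            apply tsum_congr; intro k; congr 2; ring
  have hlim1 : Tendsto (fun m => qPoch q z m * (∑' k : ℕ, z ^ k / qPoch q q k)) atTop
      (nhds (qPochInf q z * (∑' k : ℕ, z ^ k / qPoch q q k))) :=
    (tendsto_qPoch hq0 hq1 hz0 hz1).mul_const _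
  have hlow : ∀ m : ℕ, 1 ≤ ∑' k : ℕ, (q ^ m * z) ^ k / qPoch q q k := by
    intro m
    obtain ⟨hx0, hx1⟩ := hxz m
    have hsx := summable_inv_qPoch hq0 hq1 hx0 (lt_of_le_of_lt hx1 hz1)
    have h := Summable.le_tsum hsx 0 (fun i _ => by
      have := qPoch_pos hq0 hq1 hq0.le hq1 i
      positivity)
    simpa [qPoch] using h
  have hz1' : (0:ℝ) < 1 - z := by linarith
  set c : ℝ := (qPochInf q q)⁻¹ * (1 - z)⁻¹ with hc
  have hupp : ∀ m : ℕ, (∑' k : ℕ, (q ^ m * z) ^ k / qPoch q q k) ≤ 1 + c * (q ^ m * z) := by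
    intro m
    obtain ⟨hx0, hx1⟩ := hxz m
    set x := q ^ m * z with hx
    have hx1' : x < 1 := lt_of_le_of_lt hx1 hz1
    have hsx := summable_inv_qPoch hq0 hq1 hx0 hx1'
    have hshiftx : Summable (fun k : ℕ => x ^ (k + 1) / qPoch q q (k + 1)) :=
      (summable_nat_add_iff 1).2 hsx
    have hgeo : Summable (fun k : ℕ => (qPochInf q q)⁻¹ * x * x ^ k) :=
      (summable_geometric_of_lt_one hx0 hx1').mul_left _
    have h1 : (∑' k : ℕ, x ^ k / qPoch q q k)
        = 1 + ∑' k : ℕ, x ^ (k + 1) / qPoch q q (k + 1) := by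
      rw [Summable.tsum_eq_zero_add hsx]; simp [qPoch]
    rw [h1]
    have h2 : ∑' k : ℕ, x ^ (k + 1) / qPoch q q (k + 1)
        ≤ ∑' k : ℕ, (qPochInf q q)⁻¹ * x * x ^ k := by
      apply Summable.tsum_le_tsum _ hshiftx hgeo
      intro k
      have hPk := qPoch_pos hq0 hq1 hq0.le hq1 (k + 1)
      have hPle := qPochInf_le_qPoch hq0 hq1 hq0.le hq1 (k + 1)
      have hxk : (0:ℝ) ≤ x ^ (k + 1) := by positivity
      rw [div_le_iff₀ hPk]
      have heq : (qPochInf q q)⁻¹ * x * x ^ k * qPoch q q (k + 1)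
          = x ^ (k + 1) * ((qPochInf q q)⁻¹ * qPoch q q (k + 1)) := by ring
      rw [heq]
      have h3 : (1:ℝ) ≤ (qPochInf q q)⁻¹ * qPoch q q (k + 1) := by
        rw [← div_eq_inv_mul, le_div_iff₀ hPinf]; linarith
      nlinarith
    have h4 : ∑' k : ℕ, (qPochInf q q)⁻¹ * x * x ^ k = (qPochInf q q)⁻¹ * x * (1 - x)⁻¹ := by
      rw [tsum_mul_left, tsum_geometric_of_lt_one hx0 hx1']
    have h5 : (qPochInf q q)⁻¹ * x * (1 - x)⁻¹ ≤ c * x := by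
      rw [hc]
      have hinvle : (1 - x)⁻¹ ≤ (1 - z)⁻¹ := inv_anti₀ (by linarith) (by linarith)
      have hnn : (0:ℝ) ≤ (qPochInf q q)⁻¹ * x := by positivity
      calc (qPochInf q q)⁻¹ * x * (1 - x)⁻¹ ≤ (qPochInf q q)⁻¹ * x * (1 - z)⁻¹ :=
            mul_le_mul_of_nonneg_left hinvle hnn
        _ = (qPochInf q q)⁻¹ * (1 - z)⁻¹ * x := by ring
    linarith [h4 ▸ h2]
  have hlim2 : Tendsto (fun m : ℕ => ∑' k : ℕ, (q ^ m * z) ^ k / qPoch q q k) atTop (nhds 1) := by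
    apply tendsto_of_tendsto_of_tendsto_of_le_of_le (g := fun _ : ℕ => (1:ℝ))
      (h := fun m : ℕ => 1 + c * (q ^ m * z)) tendsto_const_nhds _ hlow hupp
    have hq : Tendsto (fun m : ℕ => q ^ m) atTop (nhds 0) :=
      tendsto_pow_atTop_nhds_zero_of_lt_one hq0.le hq1
    have h6 := (hq.const_mul (c * z)).const_add 1
    simp only [mul_zero, add_zero] at h6
    apply h6.congr
    intro m; ring
  have heq : qPochInf q z * (∑' k : ℕ, z ^ k / qPoch q q k) = 1 := by
    apply tendsto_nhds_unique _ hlim2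
    exact hlim1.congr key
  have hne : qPochInf q z ≠ 0 := (qPochInf_pos hq0 hq1 hz0 hz1).ne'
  field_simp
  linarith [heq]

set_option maxHeartbeats 1000000 in
/-- For `0 < q < 1`, `u, v > 0`, `α > 0`, a bounded sequence `A` and
`f(x) = ∑_{n≥0} A_n x^n`, if `u/v < 1` then
`N_q(x^{α-1} f(x))(u;v) = ((1-q)^{α-1} u^{α-1}/v^α) ∑_{n≥0} A_n (u/v)^n (1-q)^n Γ_q(α+n)`. -/
theorem qNatural_rpow_mul_series (q u v α : ℝ) (A : ℕ → ℝ)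
    (hA : ∃ C : ℝ, ∀ n : ℕ, |A n| ≤ C)
    (hq0 : 0 < q) (hq1 : q < 1) (hu : 0 < u) (hv : 0 < v) (hα : 0 < α)
    (huv : u / v < 1) :
    qNatural q (fun x => x ^ (α - 1) * ∑' n : ℕ, A n * x ^ n) u v
      = (1 - q) ^ (α - 1) * u ^ (α - 1) / v ^ α *
        ∑' n : ℕ, A n * (u / v) ^ n * (1 - q) ^ n * qGamma q (α + n) := by
  obtain ⟨C, hC⟩ := hA
  have hC0 : 0 ≤ C := le_trans (abs_nonneg _) (hC 0)
  have hr0 : 0 < u / v := div_pos hu hv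
  set r : ℝ := u / v with hrdef
  have h1q : (0:ℝ) < 1 - q := by linarith
  have hPinf := qPochInf_pos hq0 hq1 hq0.le hq1
  set z : ℕ → ℝ := fun n => q ^ (α + (n:ℝ)) with hzdef
  have hz0 : ∀ n, 0 < z n := fun n => Real.rpow_pos_of_pos hq0 _
  have hz1 : ∀ n, z n < 1 := fun n =>
    Real.rpow_lt_one hq0.le hq1 (by positivity)
  have hZpos : ∀ n, 0 < qPochInf q (z n) :=
    fun n => qPochInf_pos hq0 hq1 (hz0 n).le (hz1 n)
  set g : ℕ → ℕ → ℝ := fun n k => A n * r ^ n * z n ^ k / qPoch q q k with hgdef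
  -- summability of uncurried g
  have hqα0 : (0:ℝ) < q ^ α := Real.rpow_pos_of_pos hq0 _
  have hqα1 : q ^ α < 1 := Real.rpow_lt_one hq0.le hq1 hα
  have hgsum : Summable (Function.uncurry g) := by
    have hdom : Summable (fun p : ℕ × ℕ => C * (qPochInf q q)⁻¹ * (r ^ p.1 * (q ^ α) ^ p.2)) :=
      (((summable_geometric_of_lt_one hr0.le huv).mul_of_nonneg
        (summable_geometric_of_lt_one hqα0.le hqα1)
        (fun n => by positivity) (fun k => by positivity))).mul_left _
    apply Summable.of_norm_bounded hdom
    rintro ⟨n, k⟩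
    simp only [Function.uncurry, hgdef, Real.norm_eq_abs]
    have hPk := qPoch_pos hq0 hq1 hq0.le hq1 k
    have hPle := qPochInf_le_qPoch hq0 hq1 hq0.le hq1 k
    rw [abs_div, abs_of_pos hPk, abs_mul, abs_mul, abs_of_pos (pow_pos hr0 n),
      abs_of_pos (pow_pos (hz0 n) k)]
    have hzle : z n ≤ q ^ α := by
      rw [hzdef]
      exact Real.rpow_le_rpow_of_exponent_ge hq0 hq1.le (by simp)
    have hnum : |A n| * r ^ n * z n ^ k ≤ C * r ^ n * (q ^ α) ^ k := by
      have h1 : z n ^ k ≤ (q ^ α) ^ k := pow_le_pow_left₀ (hz0 n).le hzle k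
      have h2 : |A n| * r ^ n ≤ C * r ^ n :=
        mul_le_mul_of_nonneg_right (hC n) (pow_nonneg hr0.le n)
      calc |A n| * r ^ n * z n ^ k ≤ |A n| * r ^ n * (q ^ α) ^ k :=
            mul_le_mul_of_nonneg_left h1 (by positivity)
        _ ≤ C * r ^ n * (q ^ α) ^ k :=
            mul_le_mul_of_nonneg_right h2 (by positivity)
    calc |A n| * r ^ n * z n ^ k / qPoch q q k
        ≤ C * r ^ n * (q ^ α) ^ k / qPochInf q q :=
          div_le_div₀ (by positivity) hnum hPinf hPle
      _ = C * (qPochInf q q)⁻¹ * (r ^ n * (q ^ α) ^ k) := by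
          field_simp
  -- step 1 : termwise identity for the k-sum
  have step1 : ∀ k : ℕ,
      q ^ k * ((r * q ^ k) ^ (α - 1) * ∑' n : ℕ, A n * (r * q ^ k) ^ n) / qPoch q q k
        = r ^ (α - 1) * ∑' n : ℕ, g n k := by
    intro k
    have hPk := qPoch_pos hq0 hq1 hq0.le hq1 k
    have hqk : (0:ℝ) < q ^ k := pow_pos hq0 k
    rw [← tsum_mul_left, ← tsum_mul_left, ← tsum_mul_left, ← tsum_div_const]
    apply tsum_congr
    intro n
    have hpow : q ^ k * ((r * q ^ k) ^ (α - 1) * (r * q ^ k) ^ n)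
        = r ^ (α - 1) * r ^ n * z n ^ k := by
      rw [Real.mul_rpow hr0.le hqk.le, mul_pow]
      have e1 : ((q:ℝ) ^ k) ^ (α - 1) = q ^ ((k:ℝ) * (α - 1)) := by
        rw [← Real.rpow_natCast q k, ← Real.rpow_mul hq0.le]
      have e3 : ((q:ℝ) ^ k) ^ n = q ^ ((k:ℝ) * (n:ℝ)) := by
        rw [← pow_mul, ← Real.rpow_natCast q (k * n)]
        push_cast
        ring_nf
      have e4 : z n ^ k = q ^ ((α + (n:ℝ)) * (k:ℝ)) := by
        rw [hzdef, ← Real.rpow_natCast (q ^ (α + (n:ℝ))) k, ← Real.rpow_mul hq0.le]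
      have e5 : (q:ℝ) ^ k = q ^ ((k:ℝ)) := by
        rw [← Real.rpow_natCast q k]
      rw [e1, e3, e4, e5]
      rw [show q ^ ((k:ℝ)) * (r ^ (α - 1) * q ^ ((k:ℝ) * (α - 1)) * (r ^ n * q ^ ((k:ℝ) * (n:ℝ))))
          = r ^ (α - 1) * r ^ n * (q ^ ((k:ℝ)) * q ^ ((k:ℝ) * (α - 1)) * q ^ ((k:ℝ) * (n:ℝ))) from by ring]
      congr 1
      rw [← Real.rpow_add hq0, ← Real.rpow_add hq0]
      congr 1
      ring
    simp only [hgdef]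
    calc q ^ k * ((r * q ^ k) ^ (α - 1) * (A n * (r * q ^ k) ^ n)) / qPoch q q k
        = q ^ k * ((r * q ^ k) ^ (α - 1) * (r * q ^ k) ^ n) * A n / qPoch q q k := by ring
      _ = r ^ (α - 1) * r ^ n * z n ^ k * A n / qPoch q q k := by rw [hpow]
      _ = r ^ (α - 1) * (A n * r ^ n * z n ^ k / qPoch q q k) := by ring
  -- inner sums via Euler's identity
  have step2 : ∀ n : ℕ, (∑' k : ℕ, g n k) = A n * r ^ n * (qPochInf q (z n))⁻¹ := by
    intro n
    have h : (∑' k : ℕ, g n k) = A n * r ^ n * ∑' k : ℕ, z n ^ k / qPoch q q k := by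
      rw [← tsum_mul_left]
      apply tsum_congr
      intro k
      simp only [hgdef]
      ring
    rw [h, euler_tsum hq0 hq1 (hz0 n).le (hz1 n)]
  -- RHS termwise simplification
  have step3 : ∀ n : ℕ, A n * r ^ n * (1 - q) ^ n * qGamma q (α + (n:ℝ))
      = qPochInf q q * (1 - q) ^ (1 - α) * (A n * r ^ n * (qPochInf q (z n))⁻¹) := by
    intro n
    rw [qGamma]
    have hzn : (q:ℝ) ^ (α + (n:ℝ)) = z n := by rw [hzdef]
    rw [hzn]
    have hpown : ((1 - q) ^ n : ℝ) = (1 - q) ^ ((n:ℝ)) := (Real.rpow_natCast _ n).symm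
    rw [hpown, div_eq_mul_inv]
    have hcomb : (1 - q) ^ ((n:ℝ)) * (1 - q) ^ (1 - (α + (n:ℝ))) = (1 - q) ^ (1 - α) := by
      rw [← Real.rpow_add h1q]
      congr 1
      ring
    calc A n * r ^ n * (1 - q) ^ ((n:ℝ))
          * (qPochInf q q * (qPochInf q (z n))⁻¹ * (1 - q) ^ (1 - (α + (n:ℝ))))
        = qPochInf q q * ((1 - q) ^ ((n:ℝ)) * (1 - q) ^ (1 - (α + (n:ℝ))))
          * (A n * r ^ n * (qPochInf q (z n))⁻¹) := by ring
      _ = qPochInf q q * (1 - q) ^ (1 - α) * (A n * r ^ n * (qPochInf q (z n))⁻¹) := by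
          rw [hcomb]
  -- assemble
  set T : ℝ := ∑' n : ℕ, A n * r ^ n * (qPochInf q (z n))⁻¹ with hT
  have lhs_eq : qNatural q (fun x => x ^ (α - 1) * ∑' n : ℕ, A n * x ^ n) u v
      = qPochInf q q / v * (r ^ (α - 1) * T) := by
    rw [qNatural, ← hrdef]
    rw [tsum_congr step1, tsum_mul_left, Summable.tsum_comm hgsum, tsum_congr step2]
  have rhs_eq : (∑' n : ℕ, A n * r ^ n * (1 - q) ^ n * qGamma q (α + (n:ℝ)))
      = qPochInf q q * (1 - q) ^ (1 - α) * T := by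
    rw [tsum_congr step3, tsum_mul_left]
  rw [lhs_eq, rhs_eq]
  -- scalar identity
  have hab : (1 - q) ^ (α - 1) * (1 - q) ^ (1 - α) = 1 := by
    rw [← Real.rpow_add h1q]
    norm_num
  have hrpow : r ^ (α - 1) = u ^ (α - 1) / v ^ (α - 1) := by
    rw [hrdef, Real.div_rpow hu.le hv.le]
  have hvα : v ^ α = v ^ (α - 1) * v := by
    rw [show α = (α - 1) + 1 by ring, Real.rpow_add hv, Real.rpow_one]
    ring_nf
  have hvα1 : (0:ℝ) < v ^ (α - 1) := Real.rpow_pos_of_pos hv _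
  have hconst : qPochInf q q / v * r ^ (α - 1)
      = (1 - q) ^ (α - 1) * u ^ (α - 1) / v ^ α * (qPochInf q q * (1 - q) ^ (1 - α)) := by
    have hw : (0:ℝ) < v ^ (α - 1) := hvα1
    rw [hrpow, hvα]
    calc qPochInf q q / v * (u ^ (α - 1) / v ^ (α - 1))
        = (1 - q) ^ (α - 1) * (1 - q) ^ (1 - α)
          * (qPochInf q q / v * (u ^ (α - 1) / v ^ (α - 1))) := by rw [hab]; ring
      _ = (1 - q) ^ (α - 1) * u ^ (α - 1) / (v ^ (α - 1) * v)
          * (qPochInf q q * (1 - q) ^ (1 - α)) := by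
          field_simp
  linear_combination T * hconst
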